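/- Let 𝒢 be a family of connected non-trivial graphs on a common vertex set V and let ℋ be a family of non-trivial graphs on a common vertex set V'. Then for any G ∈ 𝒢, Sd(𝒢⊙ℋ) = Sd(G⊙ℋ). -/

import Mathlib

open SimpleGraph

/-- `S` is a metric generator for `G`: every pair of distinct vertices is
distinguished by some element of `S` via the shortest-path distance. -/
def IsMetricGen {V : Type*} (G : SimpleGraph V) (S : Set V) : Prop :=
  ∀ u v : V, u ≠ v → ∃ s ∈ S, G.dist s u ≠ G.dist s v

/-- `S` is an adjacency generator for `G`. -/
def IsAdjGen {V : Type*} (G : SimpleGraph V) (S : Set V) : Prop :=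
  ∀ x y : V, x ∉ S → y ∉ S → x ≠ y → ∃ s ∈ S, Xor' (G.Adj s x) (G.Adj s y)

/-- `S` is a simultaneous metric generator for the family `𝒢`. -/
def IsSimMetricGen {V : Type*} (𝒢 : Set (SimpleGraph V)) (S : Set V) : Prop :=
  ∀ G ∈ 𝒢, IsMetricGen G S

/-- `S` is a simultaneous adjacency generator for the family `ℋ`. -/
def IsSimAdjGen {V : Type*} (ℋ : Set (SimpleGraph V)) (S : Set V) : Prop :=
  ∀ H ∈ ℋ, IsAdjGen H S

/-- The simultaneous metric dimension of a family of graphs. -/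
noncomputable def Sd {V : Type*} (𝒢 : Set (SimpleGraph V)) : ℕ :=
  sInf {n | ∃ S : Set V, S.ncard = n ∧ IsSimMetricGen 𝒢 S}

/-- The simultaneous adjacency dimension of a family of graphs. -/
noncomputable def SdA {V : Type*} (ℋ : Set (SimpleGraph V)) : ℕ :=
  sInf {n | ∃ S : Set V, S.ncard = n ∧ IsSimAdjGen ℋ S}

/-- The adjacency dimension of a graph. -/
noncomputable def adjDim {V : Type*} (G : SimpleGraph V) : ℕ := SdA {G}

/-- `B` is an adjacency basis of `G`. -/
def IsAdjBasis {V : Type*} (G : SimpleGraph V) (B : Set V) : Prop :=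
  IsAdjGen G B ∧ B.ncard = adjDim G

/-- `B` is a simultaneous adjacency basis of the family `ℋ`. -/
def IsSimAdjBasis {V : Type*} (ℋ : Set (SimpleGraph V)) (B : Set V) : Prop :=
  IsSimAdjGen ℋ B ∧ B.ncard = SdA ℋ

/-- `D` is a dominating set of `G`. -/
def IsDomSet {V : Type*} (G : SimpleGraph V) (D : Set V) : Prop :=
  ∀ v ∉ D, ∃ u ∈ D, G.Adj u v

/-- `D` is a simultaneous dominating set of the family `𝒢`. -/
def IsSimDomSet {V : Type*} (𝒢 : Set (SimpleGraph V)) (D : Set V) : Prop :=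
  ∀ G ∈ 𝒢, IsDomSet G D

/-- The simultaneous domination number of a family of graphs. -/
noncomputable def Sgamma {V : Type*} (𝒢 : Set (SimpleGraph V)) : ℕ :=
  sInf {n | ∃ D : Set V, D.ncard = n ∧ IsSimDomSet 𝒢 D}

/-- The domination number of a graph. -/
noncomputable def domNum {V : Type*} (G : SimpleGraph V) : ℕ := Sgamma {G}

/-- `γ'(G) = min over vertices `v` of `γ(G - v)`. -/
noncomputable def gammaPrime {V : Type*} (G : SimpleGraph V) : ℕ :=
  sInf {n | ∃ v : V, n = domNum (G.induce {v}ᶜ)}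

/-- The corona product `G ⊙ H`: one copy of `G` together with a copy of `H`
for each vertex `i` of `G`, joining `i` to every vertex of its copy. -/
def corona {V V' : Type*} (G : SimpleGraph V) (H : SimpleGraph V') :
    SimpleGraph (V ⊕ V × V') where
  Adj x y :=
    match x, y with
    | Sum.inl i, Sum.inl j => G.Adj i j
    | Sum.inl i, Sum.inr p => i = p.1
    | Sum.inr p, Sum.inl j => p.1 = j
    | Sum.inr p, Sum.inr q => p.1 = q.1 ∧ H.Adj p.2 q.2
  symm := by
    constructor
    rintro (i | p) (j | q) h
    · exact G.symm.symm _ _ h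
    · exact h.symm
    · exact h.symm
    · exact ⟨h.1.symm, H.symm.symm _ _ h.2⟩
  loopless := by
    constructor
    rintro (i | p) h
    · exact G.loopless.irrefl i h
    · exact H.loopless.irrefl p.2 h.2

/-- The family `{G ⊙ H : G ∈ 𝒢, H ∈ ℋ}` of corona products. -/
def coronaFam {V V' : Type*} (𝒢 : Set (SimpleGraph V)) (ℋ : Set (SimpleGraph V')) :
    Set (SimpleGraph (V ⊕ V × V')) :=
  {K | ∃ G ∈ 𝒢, ∃ H ∈ ℋ, K = corona G H}

/-- The join `G + H` of two (vertex-disjoint) graphs. -/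
def joinG {V₁ V₂ : Type*} (G : SimpleGraph V₁) (H : SimpleGraph V₂) :
    SimpleGraph (V₁ ⊕ V₂) where
  Adj x y :=
    match x, y with
    | Sum.inl a, Sum.inl b => G.Adj a b
    | Sum.inl _, Sum.inr _ => True
    | Sum.inr _, Sum.inl _ => True
    | Sum.inr a, Sum.inr b => H.Adj a b
  symm := by
    constructor
    rintro (a | a) (b | b) h
    · exact G.symm.symm _ _ h
    · trivial
    · trivial
    · exact H.symm.symm _ _ h
  loopless := by
    constructor
    rintro (a | a) h
    · exact G.loopless.irrefl a h
    · exact H.loopless.irrefl a h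

/-- The family `{G + H : G ∈ 𝒢, H ∈ ℋ}` of joins. -/
def joinFam {V₁ V₂ : Type*} (𝒢 : Set (SimpleGraph V₁)) (ℋ : Set (SimpleGraph V₂)) :
    Set (SimpleGraph (V₁ ⊕ V₂)) :=
  {K | ∃ G ∈ 𝒢, ∃ H ∈ ℋ, K = joinG G H}

/-- The family `𝒢_B(G)`: all graphs `G'` such that, for some permutation `f` of the
vertex set fixing `B` pointwise, `N_{G'}(x) = f(N_G(x))` for every `x ∈ B`. -/
def GBfam {V : Type*} (G : SimpleGraph V) (B : Set V) : Set (SimpleGraph V) :=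
  {G' | ∃ f : Equiv.Perm V, (∀ x ∈ B, f x = x) ∧
    ∀ x ∈ B, G'.neighborSet x = f '' (G.neighborSet x)}
section CoronaAux

variable {V V' : Type*}

@[simp] lemma corona_adj_inl_inl {G : SimpleGraph V} {H : SimpleGraph V'} {i j : V} :
    (corona G H).Adj (Sum.inl i) (Sum.inl j) ↔ G.Adj i j := Iff.rfl

@[simp] lemma corona_adj_inl_inr {G : SimpleGraph V} {H : SimpleGraph V'} {i : V} {p : V × V'} :
    (corona G H).Adj (Sum.inl i) (Sum.inr p) ↔ i = p.1 := Iff.rfl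

@[simp] lemma corona_adj_inr_inl {G : SimpleGraph V} {H : SimpleGraph V'} {p : V × V'} {j : V} :
    (corona G H).Adj (Sum.inr p) (Sum.inl j) ↔ p.1 = j := Iff.rfl

@[simp] lemma corona_adj_inr_inr {G : SimpleGraph V} {H : SimpleGraph V'} {p q : V × V'} :
    (corona G H).Adj (Sum.inr p) (Sum.inr q) ↔ p.1 = q.1 ∧ H.Adj p.2 q.2 := Iff.rfl

/-- Projection of the corona vertex set onto `V`. -/
def cproj : V ⊕ V × V' → V := Sum.elim id Prod.fst

@[simp] lemma cproj_inl (i : V) : (cproj (Sum.inl i : V ⊕ V × V')) = i := rfl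
@[simp] lemma cproj_inr (p : V × V') : (cproj (Sum.inr p : V ⊕ V × V')) = p.1 := rfl

/-- The canonical embedding of `G` into `corona G H` as a graph homomorphism. -/
def coronaInl (G : SimpleGraph V) (H : SimpleGraph V') : G →g corona G H :=
  ⟨Sum.inl, fun h => h⟩

lemma corona_adj_proj {G : SimpleGraph V} {H : SimpleGraph V'} {x y : V ⊕ V × V'}
    (h : (corona G H).Adj x y) : cproj x = cproj y ∨ G.Adj (cproj x) (cproj y) := by
  rcases x with i | p <;> rcases y with j | q
  · exact Or.inr h
  · exact Or.inl h
  · exact Or.inl h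
  · exact Or.inl h.1

lemma corona_walk_proj {G : SimpleGraph V} {H : SimpleGraph V'} (hG : G.Connected) :
    ∀ {x y : V ⊕ V × V'} (p : (corona G H).Walk x y),
      G.dist (cproj x) (cproj y) ≤ p.length := by
  intro x y p
  induction p with
  | nil => exact le_of_eq SimpleGraph.dist_self
  | @cons x z y h q ih =>
    have h1 : G.dist (cproj x) (cproj z) ≤ 1 := by
      rcases corona_adj_proj h with he | ha
      · rw [he, SimpleGraph.dist_self]; exact Nat.zero_le 1
      · simpa using SimpleGraph.dist_le (SimpleGraph.Walk.cons ha SimpleGraph.Walk.nil)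
    have h2 := hG.dist_triangle (u := cproj x) (v := cproj z) (w := cproj y)
    simp only [SimpleGraph.Walk.length_cons]
    omega

lemma corona_walk_from_inr {G : SimpleGraph V} {H : SimpleGraph V'} (hG : G.Connected) :
    ∀ {x y : V ⊕ V × V'} (p : (corona G H).Walk x y) (i : V) (a : V'),
      x = Sum.inr (i, a) → cproj y ≠ i → G.dist i (cproj y) + 1 ≤ p.length := by
  intro x y p
  induction p with
  | nil =>
    intro i a hx hy
    exact absurd (by rw [hx]; rfl) hy
  | @cons x z y h q ih =>
    intro i a hx hy
    subst hx
    rcases z with k | ⟨k, c⟩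
    · have hik : i = k := h
      subst hik
      have := corona_walk_proj hG q
      simp only [cproj_inl] at this
      simp only [SimpleGraph.Walk.length_cons]
      omega
    · have hik : i = k := h.1
      subst hik
      have := ih i c rfl hy
      simp only [SimpleGraph.Walk.length_cons]
      omega

lemma corona_walk_inr_inr {G : SimpleGraph V} {H : SimpleGraph V'} (hG : G.Connected) :
    ∀ {x y : V ⊕ V × V'} (p : (corona G H).Walk x y) (i : V) (a : V') (j : V) (b : V'),
      x = Sum.inr (i, a) → y = Sum.inr (j, b) → i ≠ j → G.dist i j + 2 ≤ p.length := by
  intro x y p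
  induction p with
  | nil =>
    intro i a j b hx hy hij
    rw [hx] at hy
    exact absurd (congrArg cproj hy) hij
  | @cons x z y h q ih =>
    intro i a j b hx hy hij
    subst hx; subst hy
    rcases z with k | ⟨k, c⟩
    · have hik : i = k := h
      subst hik
      have := corona_walk_from_inr hG q.reverse j b rfl (by simpa using hij)
      rw [SimpleGraph.Walk.length_reverse] at this
      simp only [cproj_inl] at this
      rw [G.dist_comm] at this
      simp only [SimpleGraph.Walk.length_cons]
      omega
    · have hik : i = k := h.1
      subst hik
      have := ih i c j b rfl rfl hij
      simp only [SimpleGraph.Walk.length_cons]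
      omega

lemma corona_connected {G : SimpleGraph V} {H : SimpleGraph V'} (hG : G.Connected) :
    (corona G H).Connected := by
  haveI : Nonempty V := hG.nonempty
  have hreach : ∀ x : V ⊕ V × V', (corona G H).Reachable x (Sum.inl (cproj x)) := by
    rintro (i | ⟨i, a⟩)
    · exact SimpleGraph.Reachable.refl _
    · exact SimpleGraph.Adj.reachable (by simp)
  constructor
  intro x y
  refine (hreach x).trans (SimpleGraph.Reachable.trans ?_ (hreach y).symm)
  exact (hG (cproj x) (cproj y)).map (coronaInl G H)

variable {G : SimpleGraph V} {H : SimpleGraph V'}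

lemma corona_dist_inl_inl (hG : G.Connected) (i j : V) :
    (corona G H).dist (Sum.inl i) (Sum.inl j) = G.dist i j := by
  apply le_antisymm
  · obtain ⟨p, hp⟩ := hG.exists_walk_length_eq_dist i j
    have := SimpleGraph.dist_le (p.map (coronaInl G H))
    rwa [SimpleGraph.Walk.length_map, hp] at this
  · obtain ⟨q, hq⟩ := (corona_connected (H := H) hG).exists_walk_length_eq_dist
      (Sum.inl i) (Sum.inl j)
    have := corona_walk_proj hG q
    simp only [cproj_inl] at this
    omega

lemma corona_dist_inl_inr (hG : G.Connected) (j i : V) (a : V') :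
    (corona G H).dist (Sum.inl j) (Sum.inr (i, a)) = G.dist j i + 1 := by
  apply le_antisymm
  · obtain ⟨p, hp⟩ := hG.exists_walk_length_eq_dist j i
    have hadj : (corona G H).Adj (Sum.inl i) (Sum.inr (i, a)) := by simp
    have := SimpleGraph.dist_le ((p.map (coronaInl G H)).concat hadj)
    erw [SimpleGraph.Walk.length_concat, SimpleGraph.Walk.length_map, hp] at this
    exact this
  · obtain ⟨q, hq⟩ := (corona_connected (H := H) hG).exists_walk_length_eq_dist
      (Sum.inl j) (Sum.inr (i, a))
    by_cases hji : j = i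
    · subst hji
      have hpos := (corona_connected (H := H) hG).pos_dist_of_ne
        (u := Sum.inl j) (v := Sum.inr (j, a)) (by simp)
      simp only [SimpleGraph.dist_self]
      omega
    · have := corona_walk_from_inr hG q.reverse i a rfl (by simpa using hji)
      rw [SimpleGraph.Walk.length_reverse, hq] at this
      simp only [cproj_inl] at this
      rw [G.dist_comm] at this
      omega

lemma corona_dist_inr_inl (hG : G.Connected) (i : V) (c : V') (j : V) :
    (corona G H).dist (Sum.inr (i, c)) (Sum.inl j) = G.dist j i + 1 := by
  rw [SimpleGraph.dist_comm]
  exact corona_dist_inl_inr hG j i c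

lemma corona_dist_inr_inr_ne (hG : G.Connected) {i j : V} (a b : V') (hij : i ≠ j) :
    (corona G H).dist (Sum.inr (i, a)) (Sum.inr (j, b)) = G.dist i j + 2 := by
  apply le_antisymm
  · obtain ⟨p, hp⟩ := hG.exists_walk_length_eq_dist i j
    have h1 : (corona G H).Adj (Sum.inr (i, a)) (Sum.inl i) := by simp
    have h2 : (corona G H).Adj (Sum.inl j) (Sum.inr (j, b)) := by simp
    have := SimpleGraph.dist_le
      (SimpleGraph.Walk.cons h1 ((p.map (coronaInl G H)).concat h2))
    erw [SimpleGraph.Walk.length_cons, SimpleGraph.Walk.length_concat,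
      SimpleGraph.Walk.length_map, hp] at this
    omega
  · obtain ⟨q, hq⟩ := (corona_connected (H := H) hG).exists_walk_length_eq_dist
      (Sum.inr (i, a)) (Sum.inr (j, b))
    have := corona_walk_inr_inr hG q i a j b rfl rfl hij
    omega

open Classical in
/-- Distance-like function within a copy of `H` joined to a vertex. -/
noncomputable def dJ (H : SimpleGraph V') (c a : V') : ℕ :=
  if c = a then 0 else if H.Adj c a then 1 else 2

lemma dJ_le_two (H : SimpleGraph V') (c a : V') : dJ H c a ≤ 2 := by
  unfold dJ; split_ifs <;> omega

lemma corona_dist_inr_inr_same (hG : G.Connected) (i : V) (c a : V') :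
    (corona G H).dist (Sum.inr (i, c)) (Sum.inr (i, a)) = dJ H c a := by
  by_cases hca : c = a
  · subst hca; simp [dJ, SimpleGraph.dist_self]
  by_cases hAdj : H.Adj c a
  · have hd : dJ H c a = 1 := by simp [dJ, hca, hAdj]
    rw [hd]
    exact SimpleGraph.dist_eq_one_iff_adj.mpr (by simp [hAdj])
  · have hd : dJ H c a = 2 := by simp [dJ, hca, hAdj]
    rw [hd]
    apply le_antisymm
    · have h1 : (corona G H).Adj (Sum.inr (i, c)) (Sum.inl i) := by simp
      have h2 : (corona G H).Adj (Sum.inl i) (Sum.inr (i, a)) := by simp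
      have := SimpleGraph.dist_le
        (SimpleGraph.Walk.cons h1 (SimpleGraph.Walk.cons h2 SimpleGraph.Walk.nil))
      simpa using this
    · have hne : (Sum.inr (i, c) : V ⊕ V × V') ≠ Sum.inr (i, a) := by simp [hca]
      have hpos := (corona_connected (H := H) hG).pos_dist_of_ne hne
      have h1 : (corona G H).dist (Sum.inr (i, c)) (Sum.inr (i, a)) ≠ 1 := by
        intro h
        have := SimpleGraph.dist_eq_one_iff_adj.mp h
        rw [corona_adj_inr_inr] at this
        exact hAdj this.2
      omega

/-- The `G`-independent characterization of metric generators of `corona G H`. -/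
def PGen (H : SimpleGraph V') (S : Set (V ⊕ V × V')) : Prop :=
  ∀ (i : V) (a b : V'), a ≠ b → ∃ c, Sum.inr (i, c) ∈ S ∧ dJ H c a ≠ dJ H c b

lemma corona_gen_iff [Nontrivial V] [Nontrivial V'] (hG : G.Connected)
    {S : Set (V ⊕ V × V')} :
    IsMetricGen (corona G H) S ↔ PGen H S := by
  constructor
  · intro h i a b hab
    obtain ⟨s, hs, hd⟩ := h (Sum.inr (i, a)) (Sum.inr (i, b)) (by simp [hab])
    rcases s with k | ⟨k, c⟩
    · rw [corona_dist_inl_inr hG k i a, corona_dist_inl_inr hG k i b] at hd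
      exact absurd rfl hd
    · by_cases hki : k = i
      · subst hki
        rw [corona_dist_inr_inr_same hG k c a, corona_dist_inr_inr_same hG k c b] at hd
        exact ⟨c, hs, hd⟩
      · rw [corona_dist_inr_inr_ne hG c a hki, corona_dist_inr_inr_ne hG c b hki] at hd
        exact absurd rfl hd
  · intro h
    have hSne : ∀ i : V, ∃ c, Sum.inr (i, c) ∈ S := by
      intro i
      obtain ⟨a, b, hab⟩ := exists_pair_ne V'
      obtain ⟨c, hc, -⟩ := h i a b hab
      exact ⟨c, hc⟩
    have case_ll : ∀ i j : V, i ≠ j →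
        ∃ s ∈ S, (corona G H).dist s (Sum.inl i) ≠ (corona G H).dist s (Sum.inl j) := by
      intro i j hij
      obtain ⟨c, hc⟩ := hSne i
      refine ⟨Sum.inr (i, c), hc, ?_⟩
      rw [corona_dist_inr_inl hG i c i, corona_dist_inr_inl hG i c j]
      have h1 : G.dist i i = 0 := SimpleGraph.dist_self
      have h2 : 0 < G.dist j i := hG.pos_dist_of_ne (Ne.symm hij)
      omega
    have case_lr : ∀ (i j : V) (b : V'),
        ∃ s ∈ S, (corona G H).dist s (Sum.inl i) ≠ (corona G H).dist s (Sum.inr (j, b)) := by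
      intro i j b
      by_cases hij : i = j
      · subst hij
        obtain ⟨k, hk⟩ := exists_ne i
        obtain ⟨c, hc⟩ := hSne k
        refine ⟨Sum.inr (k, c), hc, ?_⟩
        rw [corona_dist_inr_inl hG k c i, corona_dist_inr_inr_ne hG c b hk,
          SimpleGraph.dist_comm (u := i) (v := k)]
        omega
      · obtain ⟨c, hc⟩ := hSne i
        refine ⟨Sum.inr (i, c), hc, ?_⟩
        rw [corona_dist_inr_inl hG i c i, corona_dist_inr_inr_ne hG c b hij]
        have h1 : G.dist i i = 0 := SimpleGraph.dist_self
        omega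
    have case_rr : ∀ (i : V) (a : V') (j : V) (b : V'),
        (Sum.inr (i, a) : V ⊕ V × V') ≠ Sum.inr (j, b) →
        ∃ s ∈ S, (corona G H).dist s (Sum.inr (i, a)) ≠
          (corona G H).dist s (Sum.inr (j, b)) := by
      intro i a j b hne
      by_cases hij : i = j
      · subst hij
        have hab : a ≠ b := by
          intro hab; exact hne (by rw [hab])
        obtain ⟨c, hc, hdJ⟩ := h i a b hab
        refine ⟨Sum.inr (i, c), hc, ?_⟩
        rw [corona_dist_inr_inr_same hG i c a, corona_dist_inr_inr_same hG i c b]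
        exact hdJ
      · obtain ⟨c, hc⟩ := hSne i
        refine ⟨Sum.inr (i, c), hc, ?_⟩
        rw [corona_dist_inr_inr_same hG i c a, corona_dist_inr_inr_ne hG c b hij]
        have h1 := dJ_le_two H c a
        have h2 : 0 < G.dist i j := hG.pos_dist_of_ne hij
        omega
    rintro (i | ⟨i, a⟩) (j | ⟨j, b⟩) huv
    · exact case_ll i j (by simpa using huv)
    · exact case_lr i j b
    · obtain ⟨s, hs, hd⟩ := case_lr j i a
      exact ⟨s, hs, hd.symm⟩
    · exact case_rr i a j b huv

end CoronaAux

theorem statement_1 {V V' : Type*} [Fintype V] [Fintype V'] [Nontrivial V] [Nontrivial V']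
    (𝒢 : Set (SimpleGraph V)) (h𝒢 : ∀ G ∈ 𝒢, G.Connected)
    (ℋ : Set (SimpleGraph V'))
    (G : SimpleGraph V) (hG : G ∈ 𝒢) :
    Sd (coronaFam 𝒢 ℋ) = Sd (coronaFam {G} ℋ) := by
  have hiff : ∀ S : Set (V ⊕ V × V'),
      IsSimMetricGen (coronaFam 𝒢 ℋ) S ↔ IsSimMetricGen (coronaFam {G} ℋ) S := by
    intro S
    constructor
    · rintro h K ⟨G', hG', Hh, hH, rfl⟩
      have hG'' : G' ∈ 𝒢 := by
        rw [Set.mem_singleton_iff] at hG'; rw [hG']; exact hG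
      exact h _ ⟨G', hG'', Hh, hH, rfl⟩
    · rintro h K ⟨G', hG', Hh, hH, rfl⟩
      have h1 : IsMetricGen (corona G Hh) S := h _ ⟨G, rfl, Hh, hH, rfl⟩
      rw [corona_gen_iff (h𝒢 G hG)] at h1
      exact (corona_gen_iff (h𝒢 G' hG')).mpr h1
  unfold Sd
  congr 1
  ext n
  simp only [Set.mem_setOf_eq]
  exact exists_congr fun S => and_congr_right fun _ => hiff S
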